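/- arXiv:0903.2673 — 5 statements merged into one kernel-verified Lean document; each statement's English description precedes it below -/
import Mathlib

section
/- Let f(z₁, z₂) be holomorphic in two variables near (0,0) and let F(u) = f(1/u, (log u)/u) for u in a left half-plane {Re u < −L}. Then for any real A there exist an element p of ℂ[u, 1/u, log u] and a constant M such that |F(u) − p(u)| ≤ M·|u|^(−A) for all u with Re u < −L. -/
/-- A branch of the logarithm, holomorphic on the left half-plane. -/
noncomputable def branchLog (u : ℂ) : ℂ := Complex.log (-u) + Real.pi * Complex.I

/-- The space `𝒫 = ℂ[u, 1/u, log u]`: the span of `u^l (log u)^m`, `l ∈ ℤ`, `m ∈ ℕ`. -/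
noncomputable def Pspace : Submodule ℂ (ℂ → ℂ) :=
  Submodule.span ℂ {f : ℂ → ℂ | ∃ (l : ℤ) (m : ℕ), f = fun u => u ^ l * branchLog u ^ m}

open scoped NNReal ENNReal

lemma term_eq (n : ℕ) (m : ContinuousMultilinearMap ℂ (fun _ : Fin n => ℂ × ℂ) ℂ) (u : ℂ) :
    m (fun _ => (1/u, branchLog u / u)) =
      ∑ S : Finset (Fin n), (u ^ (-(n:ℤ)) * branchLog u ^ (n - S.card)) *
        m (S.piecewise (fun _ => ((1:ℂ),(0:ℂ))) (fun _ => ((0:ℂ),(1:ℂ)))) := by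
  have h1 : (fun _ : Fin n => ((1/u, branchLog u / u) : ℂ × ℂ)) =
      (fun _ => (1/u) • (((1:ℂ),(0:ℂ)) : ℂ × ℂ)) +
        (fun _ => (branchLog u / u) • (((0:ℂ),(1:ℂ)) : ℂ × ℂ)) := by
    funext i
    simp [Prod.ext_iff]
  rw [h1]
  rw [show (m ((fun _ : Fin n => (1/u) • (((1:ℂ),(0:ℂ)) : ℂ × ℂ)) +
      fun _ => (branchLog u / u) • (((0:ℂ),(1:ℂ)) : ℂ × ℂ)) : ℂ) = m.toMultilinearMap _ from rfl,
    m.toMultilinearMap.map_add_univ]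
  refine Finset.sum_congr rfl fun S _ => ?_
  have h2 : S.piecewise (fun _ => (1/u) • (((1:ℂ),(0:ℂ)) : ℂ × ℂ))
      (fun _ => (branchLog u / u) • (((0:ℂ),(1:ℂ)) : ℂ × ℂ))
      = fun i => (if i ∈ S then 1/u else branchLog u / u) •
        (if i ∈ S then (((1:ℂ),(0:ℂ)) : ℂ × ℂ) else ((0:ℂ),(1:ℂ))) := by
    funext i
    by_cases hi : i ∈ S <;> simp [Finset.piecewise, hi]
  show m.toMultilinearMap _ = _
  rw [h2, m.toMultilinearMap.map_smul_univ]
  have hcard : S.card ≤ n := by simpa using Finset.card_le_univ S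
  have h3 : (∏ i : Fin n, (if i ∈ S then 1/u else branchLog u / u))
      = u ^ (-(n:ℤ)) * branchLog u ^ (n - S.card) := by
    rw [Finset.prod_ite]
    simp only [Finset.filter_mem_eq_inter, Finset.univ_inter, Finset.prod_const]
    have hfilter : (Finset.univ.filter (fun i => i ∉ S)).card = n - S.card := by
      simp [Finset.filter_not, Finset.card_sdiff_of_subset (Finset.subset_univ S)]
    rw [hfilter]
    have hz : u ^ (-(n:ℤ)) = u⁻¹ ^ n := by rw [zpow_neg, zpow_natCast, inv_pow]
    have hk : S.card + (n - S.card) = n := by omega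
    rw [hz, one_div, div_eq_mul_inv, mul_pow, mul_comm (branchLog u ^ (n - S.card)),
      ← mul_assoc, ← pow_add, hk]
  rw [h3]
  rfl

lemma mem_Pspace_term (n : ℕ) (m : ContinuousMultilinearMap ℂ (fun _ : Fin n => ℂ × ℂ) ℂ) :
    (fun u : ℂ => m (fun _ => (1/u, branchLog u / u))) ∈ Pspace := by
  have h : (fun u : ℂ => m (fun _ => (1/u, branchLog u / u))) =
      ∑ S : Finset (Fin n),
        m (S.piecewise (fun _ => ((1:ℂ),(0:ℂ))) (fun _ => ((0:ℂ),(1:ℂ)))) •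
          (fun u : ℂ => u ^ (-(n:ℤ)) * branchLog u ^ (n - S.card)) := by
    funext u
    rw [term_eq, Finset.sum_apply]
    exact Finset.sum_congr rfl fun S _ => by simp [mul_comm]
  rw [h]
  exact Submodule.sum_mem _ fun S _ => Submodule.smul_mem _ _
    (Submodule.subset_span ⟨-(n:ℤ), n - S.card, rfl⟩)

lemma mem_Pspace_partialSum (P : FormalMultilinearSeries ℂ (ℂ × ℂ) ℂ) (N : ℕ) :
    (fun u : ℂ => P.partialSum N (1/u, branchLog u / u)) ∈ Pspace := by
  have h : (fun u : ℂ => P.partialSum N (1/u, branchLog u / u)) =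
      ∑ k ∈ Finset.range N, (fun u : ℂ => (P k) fun _ => (1/u, branchLog u / u)) := by
    funext u
    simp [FormalMultilinearSeries.partialSum, Finset.sum_apply]
  rw [h]
  exact Submodule.sum_mem _ fun k _ => mem_Pspace_term k (P k)

lemma branchLog_abs_le {u : ℂ} (ht : 1 < ‖u‖) :
    ‖branchLog u‖ ≤ Real.log (‖u‖) + 2 * Real.pi := by
  have hu : u ≠ 0 := by intro h; simp [h] at ht; linarith
  have h1 : ‖branchLog u‖ ≤ ‖Complex.log (-u)‖ + Real.pi := by
    refine (norm_add_le _ _).trans ?_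
    gcongr
    simp [Complex.norm_real, abs_of_pos Real.pi_pos]
  have h2 : ‖Complex.log (-u)‖ ≤ |Real.log (‖u‖)| + Real.pi := by
    refine (Complex.norm_le_abs_re_add_abs_im _).trans ?_
    rw [Complex.log_re, Complex.log_im, norm_neg]
    gcongr
    exact Complex.abs_arg_le_pi _
  rw [abs_of_pos (Real.log_pos ht)] at h2
  linarith

lemma znorm_le {u : ℂ} (ht : 1 < ‖u‖) :
    ‖((1/u, branchLog u / u) : ℂ × ℂ)‖ ≤ (2 + 2 * Real.pi) / Real.sqrt (‖u‖) := by
  set t := ‖u‖ with htdef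
  have ht0 : (0:ℝ) < t := by linarith
  have hs1 : 1 ≤ Real.sqrt t := by
    rw [show (1:ℝ) = Real.sqrt 1 by simp]; exact Real.sqrt_le_sqrt (by linarith)
  have hs0 : 0 < Real.sqrt t := by linarith
  have hss : Real.sqrt t * Real.sqrt t = t := Real.mul_self_sqrt ht0.le
  rw [Prod.norm_def]
  have h1 : ‖1/u‖ ≤ (2 + 2 * Real.pi) / Real.sqrt t := by
    rw [norm_div, norm_one, ← htdef]
    rw [div_le_div_iff₀ ht0 hs0]
    nlinarith [Real.pi_pos]
  have h2 : ‖branchLog u / u‖ ≤ (2 + 2 * Real.pi) / Real.sqrt t := by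
    rw [norm_div, ← htdef]
    rw [div_le_div_iff₀ ht0 hs0]
    have hb := branchLog_abs_le ht
    have hlog : Real.log t ≤ 2 * Real.sqrt t - 2 := by
      have := Real.log_le_sub_one_of_pos hs0
      have hls : Real.log (Real.sqrt t) = Real.log t / 2 := Real.log_sqrt ht0.le
      linarith
    have hble : ‖branchLog u‖ ≤ 2 * Real.sqrt t - 2 + 2 * Real.pi := by linarith
    calc ‖branchLog u‖ * Real.sqrt t
        ≤ (2 * Real.sqrt t - 2 + 2 * Real.pi) * Real.sqrt t :=
          mul_le_mul_of_nonneg_right hble hs0.le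
      _ ≤ (2 + 2 * Real.pi) * t := by
          have hst : Real.sqrt t ≤ t := by nlinarith
          nlinarith [Real.pi_pos, hst, hs0]
  exact max_le h1 h2

/-- If `f(z₁,z₂)` is holomorphic near `(0,0)` and
`F(u) = f(1/u, (log u)/u)` on a left half-plane, then for any real `A` there are
`p ∈ ℂ[u, 1/u, log u]` and `M` with `|F(u) − p(u)| ≤ M|u|^(−A)` there. -/
theorem stmt_9 (f : ℂ × ℂ → ℂ) (hf : AnalyticAt ℂ f 0) (A : ℝ) :
    ∃ L : ℝ, 0 < L ∧ ∃ p ∈ Pspace, ∃ M : ℝ,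
      ∀ u : ℂ, u.re < -L →
        ‖f (1 / u, branchLog u / u) - p u‖ ≤ M * ‖u‖ ^ (-A) := by
  obtain ⟨P, r, hP⟩ := hf
  obtain ⟨r', hr'pos, hr'lt⟩ : ∃ r' : ℝ≥0, (0 : ℝ≥0∞) < r' ∧ (r' : ℝ≥0∞) < r :=
    ENNReal.lt_iff_exists_nnreal_btwn.mp hP.r_pos
  have hr'0 : (0:ℝ) < r' := by exact_mod_cast hr'pos
  obtain ⟨a, ha, C, hC, hbound⟩ := hP.uniform_geometric_approx' hr'lt
  set c : ℝ := 2 + 2 * Real.pi with hc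
  have hc0 : (0:ℝ) < c := by positivity
  clear_value c
  set N : ℕ := ⌈2 * A⌉₊ with hN
  have hAN : 2 * A ≤ N := Nat.le_ceil _
  refine ⟨max 1 ((c / r') ^ 2) + 1, by positivity,
    (fun u : ℂ => P.partialSum N (1/u, branchLog u / u)), mem_Pspace_partialSum P N,
    C * (c / r') ^ N, fun u hu => ?_⟩
  set t := ‖u‖ with htdef
  have htL : max 1 ((c / r') ^ 2) + 1 < t := by
    have h1 : -u.re ≤ t := (neg_le_abs u.re).trans (Complex.abs_re_le_norm u)
    linarith
  have ht1 : 1 < t := by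
    have := le_max_left 1 ((c / r') ^ 2)
    linarith
  have ht0 : (0:ℝ) < t := by linarith
  have hs0 : 0 < Real.sqrt t := Real.sqrt_pos.mpr ht0
  have hs1 : 1 ≤ Real.sqrt t := by
    rw [show (1:ℝ) = Real.sqrt 1 by simp]; exact Real.sqrt_le_sqrt (by linarith)
  set z : ℂ × ℂ := (1/u, branchLog u / u) with hz
  have hznorm : ‖z‖ ≤ c / Real.sqrt t := by rw [hz, hc, htdef]; exact znorm_le ht1
  have hsqrt_big : c / r' < Real.sqrt t := by
    rw [show (c / r' : ℝ) = Real.sqrt ((c / r') ^ 2) by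
      rw [Real.sqrt_sq (by positivity)]]
    refine Real.sqrt_lt_sqrt (by positivity) ?_
    have := le_max_right 1 ((c / r') ^ 2)
    linarith
  have hzlt : ‖z‖ < r' := by
    refine hznorm.trans_lt ?_
    rw [div_lt_iff₀ hs0]
    rw [div_lt_iff₀ hr'0] at hsqrt_big
    nlinarith
  have hmem : z ∈ Metric.ball (0 : ℂ × ℂ) r' := by
    rw [Metric.mem_ball, dist_zero_right]; exact hzlt
  have key := hbound z hmem N
  rw [zero_add] at key
  have haz : a * (‖z‖ / r') ≤ (c / Real.sqrt t) / r' := by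
    have h0 : (0:ℝ) ≤ ‖z‖ / r' := div_nonneg (norm_nonneg z) hr'0.le
    have h1 : ‖z‖ / r' ≤ (c / Real.sqrt t) / r' := by gcongr
    nlinarith [ha.1.le, ha.2.le]
  have haz0 : (0:ℝ) ≤ a * (‖z‖ / r') := mul_nonneg ha.1.le (div_nonneg (norm_nonneg z) hr'0.le)
  have hrpow : ((1:ℝ) / Real.sqrt t) ^ N ≤ t ^ (-A) := by
    have h1 : ((1:ℝ) / Real.sqrt t) ^ N = t ^ (-(N:ℝ) / 2) := by
      rw [one_div, Real.sqrt_eq_rpow, ← Real.rpow_neg ht0.le,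
        ← Real.rpow_natCast (t ^ (-(1/2):ℝ)) N, ← Real.rpow_mul ht0.le]
      ring_nf
    rw [h1]
    exact Real.rpow_le_rpow_of_exponent_le ht1.le (by linarith)
  show ‖f z - P.partialSum N z‖ ≤ C * (c / r') ^ N * t ^ (-A)
  calc ‖f z - P.partialSum N z‖ ≤ C * (a * (‖z‖ / r')) ^ N := key
    _ ≤ C * ((c / Real.sqrt t) / r') ^ N :=
        mul_le_mul_of_nonneg_left (pow_le_pow_left₀ haz0 haz N) hC.le
    _ = C * (c / r') ^ N * ((1:ℝ) / Real.sqrt t) ^ N := by ring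
    _ ≤ C * (c / r') ^ N * t ^ (-A) := by
        refine mul_le_mul_of_nonneg_left hrpow ?_
        positivity
end

section
/- Let Q₊ = {u ∈ ℂ : Re u < −L, Im u > −K} for constants K, L > 0, let a > 0, and let f be holomorphic on Q₊ with |f(u)| ≤ M|u|^(−A) on Q₊ for some A > 1. Then the series F₊(u) = −Σ_{m=1}^∞ f(u + 2πia·m − πia) converges on Q₊, defines a holomorphic function solving the difference equation F₊(u+iaπ) − F₊(u−iaπ) = f(u), and for every B < A−1 there is a constant M_B with |F₊(u)| ≤ M_B·|u|^(−B) on Q₊. -/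
/-- The upper-left quarter plane `Q₊ = {Re u < −L, Im u > −K}`. -/
def Qplus (K L : ℝ) : Set ℂ := {u : ℂ | u.re < -L ∧ -K < u.im}

/-- The one-sided sum `F₊(u) = −Σ_{m≥1} f(u + 2πiam − πia)`. -/
noncomputable def Fplus (a : ℝ) (f : ℂ → ℂ) (u : ℂ) : ℂ :=
  -∑' m : ℕ,
    f (u + 2 * (Real.pi : ℂ) * (a : ℂ) * ((m : ℂ) + 1) * Complex.I
        - (Real.pi : ℂ) * (a : ℂ) * Complex.I)

lemma le_abs_of_sq_le (z : ℂ) {r : ℝ} (hr : 0 ≤ r) (h : r ^ 2 ≤ z.re ^ 2 + z.im ^ 2) :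
    r ≤ ‖z‖ := by
  have h2 : (‖z‖) ^ 2 = z.re ^ 2 + z.im ^ 2 := by
    rw [Complex.sq_norm, Complex.normSq_apply]; ring
  nlinarith [norm_nonneg z]

lemma qshift {K L : ℝ} (hK : 0 < K) (hL : 0 < L) {u : ℂ} (hu : u ∈ Qplus K L) {t : ℝ}
    (ht : 0 ≤ t) :
    u + (t : ℂ) * Complex.I ∈ Qplus K L ∧ L ≤ ‖u + (t : ℂ) * Complex.I‖ ∧
    L / Real.sqrt (L ^ 2 + K ^ 2) * ‖u‖ ≤ ‖u + (t : ℂ) * Complex.I‖ ∧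
    min (1 / 2) (L / (2 * K)) * t ≤ ‖u + (t : ℂ) * Complex.I‖ := by
  obtain ⟨hre, him⟩ := hu
  have hzre : (u + (t : ℂ) * Complex.I).re = u.re := by simp
  have hzim : (u + (t : ℂ) * Complex.I).im = u.im + t := by simp
  have hLabs : L ≤ ‖u + (t : ℂ) * Complex.I‖ := by
    apply le_abs_of_sq_le _ hL.le
    rw [hzre, hzim]
    nlinarith [sq_nonneg (u.im + t)]
  refine ⟨⟨by rwa [hzre], by rw [hzim]; linarith⟩, hLabs, ?_, ?_⟩
  · set s := Real.sqrt (L ^ 2 + K ^ 2) with hs_def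
    have hs2 : s ^ 2 = L ^ 2 + K ^ 2 := Real.sq_sqrt (by positivity)
    have hs0 : 0 < s := Real.sqrt_pos.mpr (by positivity)
    have habs : (‖u‖) ^ 2 = u.re ^ 2 + u.im ^ 2 := by
      rw [Complex.sq_norm, Complex.normSq_apply]; ring
    apply le_abs_of_sq_le _ (by positivity)
    rw [hzre, hzim]
    have key : (L * ‖u‖) ^ 2 ≤ (u.re ^ 2 + (u.im + t) ^ 2) * s ^ 2 := by
      rcases le_or_gt 0 u.im with hy | hy
      · nlinarith [mul_nonneg (sq_nonneg K) (sq_nonneg u.re),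
          mul_nonneg (sq_nonneg K) (sq_nonneg (u.im + t)),
          mul_nonneg (mul_nonneg hy ht) (sq_nonneg L),
          mul_nonneg (sq_nonneg t) (sq_nonneg L)]
      · have h1 : L ^ 2 ≤ u.re ^ 2 := by nlinarith
        have h2 : u.im ^ 2 ≤ K ^ 2 := by nlinarith
        have h3 : u.im ^ 2 * L ^ 2 ≤ K ^ 2 * u.re ^ 2 :=
          mul_le_mul h2 h1 (sq_nonneg _) (sq_nonneg _)
        nlinarith [sq_nonneg (u.im + t)]
    have : (L / s * ‖u‖) ^ 2 = (L * ‖u‖) ^ 2 / s ^ 2 := by ring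
    rw [this, div_le_iff₀ (by positivity)]
    exact key
  · rcases le_or_gt (2 * K) t with htK | htK
    · calc min (1 / 2) (L / (2 * K)) * t ≤ (1 / 2) * t := by
            apply mul_le_mul_of_nonneg_right (min_le_left _ _) ht
        _ ≤ u.im + t := by linarith
        _ = (u + (t : ℂ) * Complex.I).im := hzim.symm
        _ ≤ |(u + (t : ℂ) * Complex.I).im| := le_abs_self _
        _ ≤ ‖u + (t : ℂ) * Complex.I‖ := Complex.abs_im_le_norm _
    · calc min (1 / 2) (L / (2 * K)) * t ≤ L / (2 * K) * t := by
            apply mul_le_mul_of_nonneg_right (min_le_right _ _) ht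
        _ ≤ L / (2 * K) * (2 * K) := by
            apply mul_le_mul_of_nonneg_left htK.le (by positivity)
        _ = L := by field_simp
        _ ≤ _ := hLabs

lemma summable_aux {d p : ℝ} (hd : 0 < d) (hp : p < -1) :
    Summable (fun m : ℕ => (d * (2 * (m : ℝ) + 1)) ^ p) := by
  have h1 : Summable (fun m : ℕ => ((m : ℝ) + 1) ^ p) := by
    have := (summable_nat_add_iff (f := fun n : ℕ => (n : ℝ) ^ p) 1).mpr
      (Real.summable_nat_rpow.mpr hp)
    refine this.congr fun n => ?_
    push_cast; ring_nf
  apply Summable.of_nonneg_of_le (fun m => Real.rpow_nonneg (by positivity) _)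
    (fun m => ?_) (h1.mul_left (d ^ p))
  have hbase : d * ((m : ℝ) + 1) ≤ d * (2 * (m : ℝ) + 1) := by
    apply mul_le_mul_of_nonneg_left (by linarith [Nat.cast_nonneg (α := ℝ) m]) hd.le
  calc (d * (2 * (m : ℝ) + 1)) ^ p ≤ (d * ((m : ℝ) + 1)) ^ p :=
        Real.rpow_le_rpow_of_nonpos (by positivity) hbase (by linarith)
    _ = d ^ p * ((m : ℝ) + 1) ^ p := Real.mul_rpow hd.le (by positivity)

/-- If `f` is holomorphic on `Q₊` with `|f(u)| ≤ M|u|^(−A)`, `A > 1`, then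
`F₊` converges, is holomorphic, solves `F₊(u+iaπ) − F₊(u−iaπ) = f(u)`, and satisfies
`|F₊(u)| ≤ M_B|u|^(−B)` for every `B < A−1`. -/
theorem stmt_10 (K L a A M : ℝ) (hK : 0 < K) (hL : 0 < L) (ha : 0 < a) (hA : 1 < A)
    (f : ℂ → ℂ)
    (hf : DifferentiableOn ℂ f (Qplus K L))
    (hbd : ∀ u ∈ Qplus K L, ‖f u‖ ≤ M * ‖u‖ ^ (-A)) :
    (∀ u ∈ Qplus K L,
      Summable (fun m : ℕ =>
        f (u + 2 * (Real.pi : ℂ) * (a : ℂ) * ((m : ℂ) + 1) * Complex.I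
            - (Real.pi : ℂ) * (a : ℂ) * Complex.I))) ∧
    DifferentiableOn ℂ (Fplus a f) (Qplus K L) ∧
    (∀ u : ℂ, u - (Real.pi : ℂ) * (a : ℂ) * Complex.I ∈ Qplus K L →
      Fplus a f (u + (Real.pi : ℂ) * (a : ℂ) * Complex.I)
        - Fplus a f (u - (Real.pi : ℂ) * (a : ℂ) * Complex.I) = f u) ∧
    ∀ B : ℝ, B < A - 1 → ∃ MB : ℝ, ∀ u ∈ Qplus K L,
      ‖Fplus a f u‖ ≤ MB * ‖u‖ ^ (-B) := by
  have hπ := Real.pi_pos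
  -- the shift amounts
  set t : ℕ → ℝ := fun m => Real.pi * a * (2 * m + 1) with ht_def
  have ht0 : ∀ m : ℕ, 0 < t m := fun m => by
    have : (0:ℝ) ≤ m := Nat.cast_nonneg m
    simp only [ht_def]; positivity
  have harg : ∀ (u : ℂ) (m : ℕ),
      u + 2 * (Real.pi : ℂ) * (a : ℂ) * ((m : ℂ) + 1) * Complex.I
        - (Real.pi : ℂ) * (a : ℂ) * Complex.I = u + ((t m : ℝ) : ℂ) * Complex.I := by
    intro u m; simp only [ht_def]; push_cast; ring
  -- M is nonnegative
  have hM : 0 ≤ M := by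
    have h₀ : (⟨-L - 1, 1⟩ : ℂ) ∈ Qplus K L := by
      constructor
      · show -L - 1 < -L; linarith
      · show -K < 1; linarith
    have h1 := hbd _ h₀
    have h2 : (0:ℝ) < ‖(⟨-L - 1, 1⟩ : ℂ)‖ := by
      apply norm_pos_iff.mpr
      intro h
      have := congrArg Complex.re h
      simp at this; linarith
    nlinarith [norm_nonneg (f (⟨-L - 1, 1⟩ : ℂ)), Real.rpow_pos_of_pos h2 (-A)]
  set c : ℝ := L / Real.sqrt (L ^ 2 + K ^ 2) with hc_def
  have hc : 0 < c := by
    have : (0:ℝ) < Real.sqrt (L ^ 2 + K ^ 2) := Real.sqrt_pos.mpr (by positivity)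
    positivity
  set c' : ℝ := min (1 / 2 : ℝ) (L / (2 * K)) with hc'_def
  have hc' : 0 < c' := lt_min (by norm_num) (by positivity)
  set d : ℝ := c' * (Real.pi * a) with hd_def
  have hd : 0 < d := by positivity
  have hct : ∀ m : ℕ, c' * t m = d * (2 * (m : ℝ) + 1) := by
    intro m; simp only [ht_def, hd_def]; ring
  -- uniform term bound
  set bnd : ℕ → ℝ := fun m => M * (d * (2 * (m : ℝ) + 1)) ^ (-A) with hbnd_def
  have hbnd_sum : Summable bnd := (summable_aux hd (by linarith)).mul_left M
  have Hterm : ∀ (m : ℕ), ∀ u ∈ Qplus K L,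
      ‖f (u + ((t m : ℝ) : ℂ) * Complex.I)‖ ≤ bnd m := by
    intro m u hu
    obtain ⟨hmem, -, -, hc't⟩ := qshift hK hL hu (ht0 m).le
    calc ‖f (u + ((t m : ℝ) : ℂ) * Complex.I)‖
        ≤ M * ‖u + ((t m : ℝ) : ℂ) * Complex.I‖ ^ (-A) := hbd _ hmem
      _ ≤ M * (c' * t m) ^ (-A) := by
          apply mul_le_mul_of_nonneg_left _ hM
          exact Real.rpow_le_rpow_of_nonpos (by positivity) hc't (by linarith)
      _ = bnd m := by rw [hct m]
  -- Part 1
  have part1 : ∀ u ∈ Qplus K L,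
      Summable (fun m : ℕ =>
        f (u + 2 * (Real.pi : ℂ) * (a : ℂ) * ((m : ℂ) + 1) * Complex.I
            - (Real.pi : ℂ) * (a : ℂ) * Complex.I)) := by
    intro u hu
    apply Summable.of_norm
    apply Summable.of_nonneg_of_le (fun m => norm_nonneg _) (fun m => ?_) hbnd_sum
    rw [harg u m]
    exact Hterm m u hu
  refine ⟨part1, ?_, ?_, ?_⟩
  -- Part 2: holomorphy
  · have hopen : IsOpen (Qplus K L) := by
      have : Qplus K L = Complex.re ⁻¹' Set.Iio (-L) ∩ Complex.im ⁻¹' Set.Ioi (-K) := rfl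
      rw [this]
      exact (isOpen_Iio.preimage Complex.continuous_re).inter
        (isOpen_Ioi.preimage Complex.continuous_im)
    have hdiff : DifferentiableOn ℂ (fun u : ℂ => -∑' m : ℕ,
        f (u + 2 * (Real.pi : ℂ) * (a : ℂ) * ((m : ℂ) + 1) * Complex.I
            - (Real.pi : ℂ) * (a : ℂ) * Complex.I)) (Qplus K L) := by
      apply DifferentiableOn.neg
      apply Complex.differentiableOn_tsum_of_summable_norm hbnd_sum ?_ hopen
      · intro m w hw
        rw [harg w m]
        exact Hterm m w hw
      · intro m
        have : (fun u : ℂ => f (u + 2 * (Real.pi : ℂ) * (a : ℂ) * ((m : ℂ) + 1) * Complex.I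
            - (Real.pi : ℂ) * (a : ℂ) * Complex.I))
            = f ∘ (fun u : ℂ => u + (((t m : ℝ) : ℂ) * Complex.I)) := by
          funext u; simp only [Function.comp_apply, harg u m]
        rw [this]
        apply DifferentiableOn.comp hf
        · exact (differentiable_id.add_const _).differentiableOn
        · intro u hu
          exact (qshift hK hL hu (ht0 m).le).1
    exact hdiff
  -- Part 3: difference equation
  · intro u hu
    set u' := u - (Real.pi : ℂ) * (a : ℂ) * Complex.I with hu'_def
    set g : ℕ → ℂ := fun m => f (u + 2 * (Real.pi : ℂ) * (a : ℂ) * (m : ℂ) * Complex.I)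
      with hg_def
    have hgt : ∀ m : ℕ, u + 2 * (Real.pi : ℂ) * (a : ℂ) * (m : ℂ) * Complex.I
        = u' + ((t m : ℝ) : ℂ) * Complex.I := by
      intro m; simp only [hu'_def, ht_def]; push_cast; ring
    have hg_sum : Summable g := by
      apply Summable.of_norm
      apply Summable.of_nonneg_of_le (fun m => norm_nonneg _) (fun m => ?_) hbnd_sum
      simp only [hg_def, hgt]
      exact Hterm m u' hu
    have e1 : Fplus a f (u + (Real.pi : ℂ) * (a : ℂ) * Complex.I) = -∑' m : ℕ, g (m + 1) := by
      unfold Fplus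
      congr 1
      apply tsum_congr
      intro m
      simp only [hg_def]
      congr 1
      push_cast; ring
    have e2 : Fplus a f (u - (Real.pi : ℂ) * (a : ℂ) * Complex.I) = -∑' m : ℕ, g m := by
      unfold Fplus
      congr 1
      apply tsum_congr
      intro m
      simp only [hg_def]
      congr 1
      push_cast; ring
    have hg0 : g 0 = f u := by simp [hg_def]
    rw [e1, e2, Summable.tsum_eq_zero_add hg_sum, hg0]
    ring
  -- Part 4: decay bound
  · intro B hB
    set B0 : ℝ := max B 0 with hB0_def
    have hB0 : 0 ≤ B0 := le_max_right _ _
    have hB0A : B0 < A - 1 := max_lt hB (by linarith)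
    have hBB0 : B ≤ B0 := le_max_left _ _
    set S : ℝ := ∑' m : ℕ, (d * (2 * (m : ℝ) + 1)) ^ (B0 - A) with hS_def
    have hS_sum : Summable (fun m : ℕ => (d * (2 * (m : ℝ) + 1)) ^ (B0 - A)) :=
      summable_aux hd (by linarith)
    have hS0 : 0 ≤ S := tsum_nonneg fun m => Real.rpow_nonneg (by positivity) _
    refine ⟨M * c ^ (-B0) * S * L ^ (B - B0), fun u hu => ?_⟩
    have hLu : L ≤ ‖u‖ := by
      have := (qshift hK hL hu (le_refl (0:ℝ))).2.1
      simpa using this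
    have hu0 : 0 < ‖u‖ := lt_of_lt_of_le hL hLu
    -- per-term refined bound
    have h4 : ∀ m : ℕ, ‖f (u + 2 * (Real.pi : ℂ) * (a : ℂ) * ((m : ℂ) + 1) * Complex.I
        - (Real.pi : ℂ) * (a : ℂ) * Complex.I)‖
        ≤ (M * (c * ‖u‖) ^ (-B0)) * (d * (2 * (m : ℝ) + 1)) ^ (B0 - A) := by
      intro m
      rw [harg u m]
      obtain ⟨hmem, -, hcu, hc't⟩ := qshift hK hL hu (ht0 m).le
      set z := u + ((t m : ℝ) : ℂ) * Complex.I with hz_def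
      have hz0 : (0:ℝ) < ‖z‖ := by
        have := (qshift hK hL hu (ht0 m).le).2.1
        exact lt_of_lt_of_le hL this
      calc ‖f z‖ ≤ M * ‖z‖ ^ (-A) := hbd _ hmem
        _ = M * (‖z‖ ^ (-B0) * ‖z‖ ^ (B0 - A)) := by
            rw [← Real.rpow_add hz0]; ring_nf
        _ ≤ M * ((c * ‖u‖) ^ (-B0) * (c' * t m) ^ (B0 - A)) := by
            apply mul_le_mul_of_nonneg_left _ hM
            apply mul_le_mul
            · exact Real.rpow_le_rpow_of_nonpos (by positivity) hcu (by linarith)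
            · exact Real.rpow_le_rpow_of_nonpos (by positivity) hc't (by linarith)
            · exact Real.rpow_nonneg (norm_nonneg _) _
            · exact Real.rpow_nonneg (by positivity) _
        _ = (M * (c * ‖u‖) ^ (-B0)) * (d * (2 * (m : ℝ) + 1)) ^ (B0 - A) := by
            rw [hct m]; ring
    have hnorm_sum : Summable (fun m : ℕ =>
        ‖f (u + 2 * (Real.pi : ℂ) * (a : ℂ) * ((m : ℂ) + 1) * Complex.I
            - (Real.pi : ℂ) * (a : ℂ) * Complex.I)‖) := by
      apply Summable.of_nonneg_of_le (fun m => norm_nonneg _) h4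
        (hS_sum.mul_left _)
    calc ‖Fplus a f u‖
        = ‖∑' m : ℕ,
            f (u + 2 * (Real.pi : ℂ) * (a : ℂ) * ((m : ℂ) + 1) * Complex.I
              - (Real.pi : ℂ) * (a : ℂ) * Complex.I)‖ := by
          unfold Fplus; rw [norm_neg]
      _ ≤ ∑' m : ℕ, ‖f (u + 2 * (Real.pi : ℂ) * (a : ℂ) * ((m : ℂ) + 1) * Complex.I
              - (Real.pi : ℂ) * (a : ℂ) * Complex.I)‖ := norm_tsum_le_tsum_norm hnorm_sum
      _ ≤ ∑' m : ℕ, (M * (c * ‖u‖) ^ (-B0)) * (d * (2 * (m : ℝ) + 1)) ^ (B0 - A) :=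
          Summable.tsum_le_tsum h4 hnorm_sum (hS_sum.mul_left _)
      _ = (M * (c * ‖u‖) ^ (-B0)) * S := by rw [tsum_mul_left]
      _ ≤ M * c ^ (-B0) * S * L ^ (B - B0) * ‖u‖ ^ (-B) := by
          rw [Real.mul_rpow hc.le (norm_nonneg u)]
          have h6 : ‖u‖ ^ (-B0) ≤ L ^ (B - B0) * ‖u‖ ^ (-B) := by
            have e : ‖u‖ ^ (-B0)
                = ‖u‖ ^ (B - B0) * ‖u‖ ^ (-B) := by
              rw [← Real.rpow_add hu0]; ring_nf
            rw [e]
            apply mul_le_mul_of_nonneg_right _ (Real.rpow_nonneg (norm_nonneg u) _)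
            exact Real.rpow_le_rpow_of_nonpos hL hLu (by linarith)
          calc M * (c ^ (-B0) * ‖u‖ ^ (-B0)) * S
              ≤ M * (c ^ (-B0) * (L ^ (B - B0) * ‖u‖ ^ (-B))) * S := by
                apply mul_le_mul_of_nonneg_right _ hS0
                exact mul_le_mul_of_nonneg_left
                  (mul_le_mul_of_nonneg_left h6 (Real.rpow_nonneg hc.le _)) hM
            _ = M * c ^ (-B0) * S * L ^ (B - B0) * ‖u‖ ^ (-B) := by ring
end

section
/- Let a > 0, let A > 1 and let p be holomorphic on a left half-plane with |p(u)| ≤ M|u|^(−A) and |p'(u)| ≤ M'|u|^(−(A+1)) there. Set P(u) = ∫ p (an antiderivative) and define G(u) = (1/(2πia))·(P(u+iaπ) − P(u−iaπ)). Then |p(u) − G(u)| ≤ C·|u|^(−(A+1)) for some constant C, uniformly on a smaller left half-plane. -/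
/-- With `P' = p`, `|p| ≤ M|u|^(−A)`, `|p'| ≤ M'|u|^(−(A+1))` on a left
half-plane, the function `G(u) = (1/(2πia))(P(u+iaπ) − P(u−iaπ))` satisfies
`|p(u) − G(u)| ≤ C|u|^(−(A+1))` on a smaller left half-plane. -/
theorem stmt_11 (a A L M M' : ℝ) (ha : 0 < a) (hA : 1 < A)
    (p P : ℂ → ℂ)
    (hp : DifferentiableOn ℂ p {u : ℂ | u.re < -L})
    (hbd : ∀ u : ℂ, u.re < -L → ‖p u‖ ≤ M * ‖u‖ ^ (-A))
    (hbd' : ∀ u : ℂ, u.re < -L →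
      ‖deriv p u‖ ≤ M' * ‖u‖ ^ (-(A + 1)))
    (hP : ∀ u : ℂ, u.re < -L → HasDerivAt P (p u) u) :
    ∃ C L' : ℝ, L ≤ L' ∧ ∀ u : ℂ, u.re < -L' →
      ‖p u -
        (1 / (2 * (Real.pi : ℂ) * Complex.I * (a : ℂ))) *
          (P (u + (Real.pi : ℂ) * (a : ℂ) * Complex.I)
            - P (u - (Real.pi : ℂ) * (a : ℂ) * Complex.I))‖
        ≤ C * ‖u‖ ^ (-(A + 1)) := by
  have hπ : (0:ℝ) < Real.pi := Real.pi_pos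
  set b : ℝ := Real.pi * a with hbdef
  have hbpos : 0 < b := mul_pos hπ ha
  have hopen : IsOpen {u : ℂ | u.re < -L} := isOpen_lt Complex.continuous_re continuous_const
  refine ⟨b * M' * 2 ^ (A + 1), max L (2 * b), le_max_left _ _, ?_⟩
  intro u hu
  have huL : u.re < -L := lt_of_lt_of_le hu (neg_le_neg (le_max_left _ _))
  have habsu : 2 * b < ‖u‖ := by
    have h2 : max L (2 * b) < -u.re := by
      have := hu; linarith [hu]
    calc 2 * b ≤ max L (2 * b) := le_max_right _ _
      _ < -u.re := h2
      _ ≤ |u.re| := neg_le_abs _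
      _ ≤ ‖u‖ := Complex.abs_re_le_norm u
  have habsu_pos : 0 < ‖u‖ := by linarith
  -- the line t ↦ u + t i
  set line : ℝ → ℂ := fun t => u + (t : ℂ) * Complex.I with hlinedef
  have hline_re : ∀ t : ℝ, (line t).re = u.re := by
    intro t; simp [hlinedef]
  have hline_mem : ∀ t : ℝ, (line t).re < -L := fun t => by rw [hline_re]; exact huL
  have hline_deriv : ∀ t : ℝ, HasDerivAt line Complex.I t := by
    intro t
    have h1 : HasDerivAt (fun t : ℝ => (t : ℂ)) 1 t := by
      simpa using (hasDerivAt_id t).ofReal_comp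
    have := (h1.mul_const Complex.I).const_add u
    simpa [hlinedef] using this
  -- lower bound for |line t| when |t| ≤ b
  have hline_abs : ∀ t : ℝ, |t| ≤ b → ‖u‖ / 2 ≤ ‖line t‖ := by
    intro t ht
    have h1 : ‖u‖ ≤ ‖line t‖ + ‖-((t:ℂ) * Complex.I)‖ := by
      calc ‖u‖ = ‖line t + (-((t:ℂ) * Complex.I))‖ := by
            congr 1; simp [hlinedef]
        _ ≤ _ := norm_add_le _ _
    rw [norm_neg] at h1
    have h2 : ‖(t:ℂ) * Complex.I‖ = |t| := by
      simp
    have : ‖u‖ - b ≤ ‖line t‖ := by rw [h2] at h1; linarith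
    linarith
  -- derivative bound on the segment
  set K : ℝ := M' * (‖u‖ / 2) ^ (-(A + 1)) with hKdef
  have hM' : 0 ≤ M' := by
    have h := hbd' u huL
    have hpow : 0 < ‖u‖ ^ (-(A + 1)) := Real.rpow_pos_of_pos habsu_pos _
    nlinarith [norm_nonneg (deriv p u)]
  have hKbound : ∀ t : ℝ, |t| ≤ b → ‖deriv p (line t)‖ ≤ K := by
    intro t ht
    have hmem := hline_mem t
    have h1 := hbd' (line t) hmem
    have h2 : ‖line t‖ ^ (-(A + 1)) ≤ (‖u‖ / 2) ^ (-(A + 1)) :=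
      Real.rpow_le_rpow_of_nonpos (by linarith) (hline_abs t ht) (by linarith)
    calc ‖deriv p (line t)‖ ≤ M' * ‖line t‖ ^ (-(A + 1)) := h1
      _ ≤ K := by rw [hKdef]; exact mul_le_mul_of_nonneg_left h2 hM'
  -- FTC along the vertical segment
  have hcont : ContinuousOn (fun t : ℝ => p (line t)) Set.univ := by
    intro t _
    exact ((hp.differentiableAt (hopen.mem_nhds (hline_mem t))).continuousAt.comp
      ((hline_deriv t).continuousAt)).continuousWithinAt
  have hint : IntervalIntegrable (fun t : ℝ => p (line t) * Complex.I)
      MeasureTheory.volume (-b) b :=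
    ((hcont.mono (Set.subset_univ _)).mul continuousOn_const).intervalIntegrable
  have hint2 : IntervalIntegrable (fun t : ℝ => p (line t))
      MeasureTheory.volume (-b) b :=
    (hcont.mono (Set.subset_univ _)).intervalIntegrable
  have hftc : (∫ t in (-b)..b, p (line t) * Complex.I)
      = P (line b) - P (line (-b)) := by
    refine intervalIntegral.integral_eq_sub_of_hasDerivAt
      (f := fun t : ℝ => P (line t)) (fun t _ => ?_) hint
    exact (hP (line t) (hline_mem t)).comp t (hline_deriv t)
  -- rewrite the target difference as an average
  have hIne : (Complex.I : ℂ) ≠ 0 := Complex.I_ne_zero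
  have hbne : (b : ℂ) ≠ 0 := by exact_mod_cast hbpos.ne'
  have hendp : line b = u + (Real.pi : ℂ) * (a : ℂ) * Complex.I ∧
      line (-b) = u - (Real.pi : ℂ) * (a : ℂ) * Complex.I := by
    constructor
    · show u + ((b : ℝ) : ℂ) * Complex.I = _
      rw [hbdef]; push_cast; ring
    · show u + ((-b : ℝ) : ℂ) * Complex.I = _
      rw [hbdef]; push_cast; ring
  have hπane : (2 * (Real.pi : ℂ) * Complex.I * (a : ℂ)) ≠ 0 := by
    simp [Complex.I_ne_zero, Real.pi_ne_zero, ha.ne']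
  have hsplit : p u -
      (1 / (2 * (Real.pi : ℂ) * Complex.I * (a : ℂ))) *
        (P (u + (Real.pi : ℂ) * (a : ℂ) * Complex.I)
          - P (u - (Real.pi : ℂ) * (a : ℂ) * Complex.I))
      = (1 / (2 * (b : ℂ))) * ∫ t in (-b)..b, (p u - p (line t)) := by
    rw [← hendp.1, ← hendp.2, ← hftc]
    rw [intervalIntegral.integral_sub intervalIntegrable_const hint2,
        intervalIntegral.integral_const, intervalIntegral.integral_mul_const]
    have h2b : (b - (-b)) • p u = (2 * (b:ℂ)) * p u := by
      push_cast; rw [Complex.real_smul]; push_cast; ring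
    rw [h2b]
    have hbc : (b : ℂ) = (Real.pi : ℂ) * (a : ℂ) := by rw [hbdef]; push_cast; ring
    generalize (∫ t in (-b)..b, p (line t)) = J
    rw [hbc]
    have hπc : ((Real.pi : ℝ) : ℂ) ≠ 0 := by exact_mod_cast Real.pi_ne_zero
    have hac : ((a : ℝ) : ℂ) ≠ 0 := by exact_mod_cast ha.ne'
    field_simp
  rw [hsplit]
  -- pointwise bound via MVT
  have hmvt : ∀ t ∈ Set.uIoc (-b) b, ‖p u - p (line t)‖ ≤ K * b := by
    intro t ht
    have htmem : t ∈ Set.Icc (-b) b := by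
      have := Set.uIoc_subset_uIcc ht
      rwa [Set.uIcc_of_le (by linarith : -b ≤ b)] at this
    have habs_t : |t| ≤ b := abs_le.2 ⟨htmem.1, htmem.2⟩
    have h0mem : (0:ℝ) ∈ Set.Icc (-b) b := ⟨by linarith, by linarith⟩
    have hderivs : ∀ s ∈ Set.Icc (-b) b,
        HasDerivWithinAt (fun t : ℝ => p (line t)) (deriv p (line s) * Complex.I)
          (Set.Icc (-b) b) s := by
      intro s _
      exact (((hp.differentiableAt (hopen.mem_nhds (hline_mem s))).hasDerivAt).comp
        s (hline_deriv s)).hasDerivWithinAt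
    have hbnd : ∀ s ∈ Set.Icc (-b) b, ‖deriv p (line s) * Complex.I‖ ≤ K := by
      intro s hs
      have : |s| ≤ b := abs_le.2 ⟨hs.1, hs.2⟩
      simpa using hKbound s this
    have := Convex.norm_image_sub_le_of_norm_hasDerivWithin_le hderivs hbnd
      (convex_Icc _ _) htmem h0mem
    have hline0 : line 0 = u := by simp [hlinedef]
    rw [hline0] at this
    calc ‖p u - p (line t)‖ ≤ K * ‖(0:ℝ) - t‖ := this
      _ = K * |t| := by rw [norm_sub_rev]; simp
      _ ≤ K * b := by
        apply mul_le_mul_of_nonneg_left habs_t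
        have : 0 ≤ (‖u‖ / 2) ^ (-(A + 1)) :=
          (Real.rpow_pos_of_pos (by linarith) _).le
        rw [hKdef]; positivity
  have hintbound : ‖∫ t in (-b)..b, (p u - p (line t))‖ ≤ (K * b) * (2 * b) := by
    have := intervalIntegral.norm_integral_le_of_norm_le_const hmvt
    calc ‖∫ t in (-b)..b, (p u - p (line t))‖ ≤ (K * b) * |b - (-b)| := this
      _ = (K * b) * (2 * b) := by rw [abs_of_pos (by linarith : (0:ℝ) < b - (-b))]; ring
  have hKval : K = M' * 2 ^ (A + 1) * ‖u‖ ^ (-(A + 1)) := by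
    rw [hKdef, Real.div_rpow (norm_nonneg u) (by norm_num : (0:ℝ) ≤ 2),
        Real.rpow_neg (norm_nonneg u), Real.rpow_neg (by norm_num : (0:ℝ) ≤ 2)]
    rw [div_eq_mul_inv, inv_inv]
    ring
  calc ‖(1 / (2 * (b : ℂ))) * ∫ t in (-b)..b, (p u - p (line t))‖
      = (1 / (2 * b)) * ‖∫ t in (-b)..b, (p u - p (line t))‖ := by
        rw [norm_mul]
        congr 1
        rw [norm_div]
        simp [abs_of_pos hbpos]
    _ ≤ (1 / (2 * b)) * ((K * b) * (2 * b)) := by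
        apply mul_le_mul_of_nonneg_left hintbound
        positivity
    _ = K * b := by field_simp
    _ = b * M' * 2 ^ (A + 1) * ‖u‖ ^ (-(A + 1)) := by rw [hKval]; ring
end

section
/- Let α ∈ ℝ and define w = w(u) implicitly by w^α·e^(−1/w) = e^u for Re u ≪ 0 (i.e. α·log w − 1/w = u with a suitable branch). Then there exists a holomorphic function g of two variables near (0,0) with g(0,0) = 0 and a nonzero constant a such that w(u) = (1/u)·(a + g(1/u, (log u)/u)) for Re u sufficiently negative. In particular w(u) ~ −1/u as Re u → −∞ when normalized appropriately. -/
open Complex Topology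

noncomputable def Fimp (α : ℝ) (q : (ℂ × ℂ) × ℂ) : ℂ :=
  (α : ℂ) * (q.1.1 * Complex.log q.2 - q.1.2 + Real.pi * Complex.I * q.1.1) + q.2⁻¹ - 1

noncomputable def PhiImp (α : ℝ) (q : (ℂ × ℂ) × ℂ) : (ℂ × ℂ) × ℂ := (q.1, Fimp α q)

def p0 : (ℂ × ℂ) × ℂ := ((0, 0), 1)

noncomputable def iMap (α : ℝ) (δ : (ℂ × ℂ) × ℂ) : (ℂ × ℂ) × ℂ :=
  (δ.1, (α : ℂ) * (Real.pi * Complex.I * δ.1.1 - δ.1.2) - δ.2)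

noncomputable def iLin (α : ℝ) : ((ℂ × ℂ) × ℂ) →ₗ[ℂ] ((ℂ × ℂ) × ℂ) where
  toFun := iMap α
  map_add' x y := by simp [iMap, Prod.ext_iff]; ring
  map_smul' c x := by simp [iMap, Prod.ext_iff, smul_eq_mul]; ring

lemma iMap_invol (α : ℝ) : Function.Involutive (iMap α) := by
  intro δ; simp [iMap, Prod.ext_iff]

noncomputable def iEquiv (α : ℝ) : ((ℂ × ℂ) × ℂ) ≃L[ℂ] ((ℂ × ℂ) × ℂ) :=
  (LinearEquiv.ofInvolutive (iLin α) (iMap_invol α)).toContinuousLinearEquiv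

lemma analyticAt_Fimp (α : ℝ) : AnalyticAt ℂ (Fimp α) p0 := by
  have ha11 : AnalyticAt ℂ (fun q : (ℂ × ℂ) × ℂ => q.1.1) p0 :=
    analyticAt_fst.comp analyticAt_fst
  have ha12 : AnalyticAt ℂ (fun q : (ℂ × ℂ) × ℂ => q.1.2) p0 :=
    analyticAt_snd.comp analyticAt_fst
  have hlog : AnalyticAt ℂ (fun q : (ℂ × ℂ) × ℂ => Complex.log q.2) p0 :=
    (analyticAt_clog (z := p0.2) Complex.one_mem_slitPlane).comp analyticAt_snd
  have hinv : AnalyticAt ℂ (fun q : (ℂ × ℂ) × ℂ => q.2⁻¹) p0 :=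
    analyticAt_snd.inv (by norm_num [p0])
  exact ((analyticAt_const.mul (((ha11.mul hlog).sub ha12).add
    (analyticAt_const.mul ha11))).add hinv).sub analyticAt_const

lemma analyticAt_Phi (α : ℝ) : AnalyticAt ℂ (PhiImp α) p0 :=
  analyticAt_fst.prod (analyticAt_Fimp α)

lemma iEquiv_apply (α : ℝ) (δ : (ℂ × ℂ) × ℂ) : iEquiv α δ = iMap α δ := rfl

lemma hasFDerivAt_Phi (α : ℝ) :
    HasFDerivAt (PhiImp α) ((iEquiv α : ((ℂ × ℂ) × ℂ) ≃L[ℂ] ((ℂ × ℂ) × ℂ)) :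
      ((ℂ × ℂ) × ℂ) →L[ℂ] ((ℂ × ℂ) × ℂ)) p0 := by
  have h11 : HasFDerivAt (fun q : (ℂ × ℂ) × ℂ => q.1.1)
      ((ContinuousLinearMap.fst ℂ ℂ ℂ).comp (ContinuousLinearMap.fst ℂ (ℂ × ℂ) ℂ)) p0 :=
    HasFDerivAt.comp p0 hasFDerivAt_fst hasFDerivAt_fst
  have h12 : HasFDerivAt (fun q : (ℂ × ℂ) × ℂ => q.1.2)
      ((ContinuousLinearMap.snd ℂ ℂ ℂ).comp (ContinuousLinearMap.fst ℂ (ℂ × ℂ) ℂ)) p0 :=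
    HasFDerivAt.comp p0 hasFDerivAt_snd hasFDerivAt_fst
  have hlog : HasFDerivAt (fun q : (ℂ × ℂ) × ℂ => Complex.log q.2)
      (((1 : ℂ))⁻¹ • ContinuousLinearMap.snd ℂ (ℂ × ℂ) ℂ) p0 :=
    (Complex.hasDerivAt_log (show (p0.2 : ℂ) ∈ Complex.slitPlane from
      Complex.one_mem_slitPlane)).comp_hasFDerivAt p0 hasFDerivAt_snd
  have hinv : HasFDerivAt (fun q : (ℂ × ℂ) × ℂ => q.2⁻¹)
      (-((p0.2 : ℂ) ^ 2)⁻¹ • ContinuousLinearMap.snd ℂ (ℂ × ℂ) ℂ) p0 :=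
    (hasDerivAt_inv (by norm_num [p0])).comp_hasFDerivAt p0 hasFDerivAt_snd
  have hF : HasFDerivAt (Fimp α) _ p0 :=
    (((((h11.mul hlog).sub h12).add (h11.const_mul ((Real.pi : ℂ) * Complex.I))).const_mul
      (α : ℂ)).add hinv).sub_const 1
  refine (hasFDerivAt_fst.prodMk hF).congr_fderiv ?_
  refine ContinuousLinearMap.ext fun δ => ?_
  rw [show ((iEquiv α : ((ℂ × ℂ) × ℂ) →L[ℂ] ((ℂ × ℂ) × ℂ)) δ) = iMap α δ from rfl]
  simp [iMap, p0, Prod.ext_iff]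
  ring

lemma exists_implicit (α : ℝ) : ∃ h : ℂ × ℂ → ℂ, AnalyticAt ℂ h 0 ∧ h 0 = 1 ∧
    ∀ᶠ z in 𝓝 (0 : ℂ × ℂ), Fimp α (z, h z) = 0 := by
  have hana := analyticAt_Phi α
  have hd := hasFDerivAt_Phi α
  have hstrict : HasStrictFDerivAt (PhiImp α)
      ((iEquiv α) : ((ℂ × ℂ) × ℂ) →L[ℂ] ((ℂ × ℂ) × ℂ)) p0 := by
    have := hana.hasStrictFDerivAt
    rwa [hd.fderiv] at this
  set φ := hstrict.toOpenPartialHomeomorph (PhiImp α) with hφdef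
  have hsrc : p0 ∈ φ.source := hstrict.mem_toOpenPartialHomeomorph_source
  have hcoe : (φ : (ℂ × ℂ) × ℂ → (ℂ × ℂ) × ℂ) = PhiImp α := hstrict.toOpenPartialHomeomorph_coe
  have hPhip0 : PhiImp α p0 = ((0, 0), 0) := by
    simp [PhiImp, Fimp, p0]
  have hφp0 : φ p0 = ((0, 0), 0) := by rw [hcoe]; exact hPhip0
  have htgt : ((((0 : ℂ), (0 : ℂ)), (0 : ℂ)) : (ℂ × ℂ) × ℂ) ∈ φ.target := by
    rw [← hφp0]; exact φ.map_source hsrc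
  have hsymm : AnalyticAt ℂ φ.symm ((((0 : ℂ), (0 : ℂ)), (0 : ℂ)) : (ℂ × ℂ) × ℂ) := by
    have h' : fderiv ℂ (φ : (ℂ × ℂ) × ℂ → (ℂ × ℂ) × ℂ) p0 = iEquiv α := by
      rw [hcoe]; exact hd.fderiv
    have := φ.analyticAt_symm' hsrc (by rw [hcoe]; exact hana) h'
    rwa [hφp0] at this
  refine ⟨fun z => (φ.symm (z, 0)).2, ?_, ?_, ?_⟩
  · have hin : AnalyticAt ℂ (fun z : ℂ × ℂ => ((z, (0 : ℂ)) : (ℂ × ℂ) × ℂ)) 0 :=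
      analyticAt_id.prod analyticAt_const
    have hmid : AnalyticAt ℂ (fun z : ℂ × ℂ => φ.symm ((z, (0 : ℂ)) : (ℂ × ℂ) × ℂ)) 0 :=
      AnalyticAt.comp (g := φ.symm)
        (f := fun z : ℂ × ℂ => ((z, (0 : ℂ)) : (ℂ × ℂ) × ℂ)) (x := 0) hsymm hin
    exact analyticAt_snd.comp hmid
  · have hback : φ.symm ((((0 : ℂ), (0 : ℂ)), (0 : ℂ)) : (ℂ × ℂ) × ℂ) = p0 := by
      rw [← hφp0]; exact φ.left_inv hsrc
    show (φ.symm (((0 : ℂ), (0 : ℂ)), (0 : ℂ))).2 = 1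
    rw [hback]; rfl
  · have hc : ContinuousAt (fun z : ℂ × ℂ => ((z, (0 : ℂ)) : (ℂ × ℂ) × ℂ)) 0 := by fun_prop
    have hev : ∀ᶠ z in 𝓝 (0 : ℂ × ℂ), ((z, (0 : ℂ)) : (ℂ × ℂ) × ℂ) ∈ φ.target :=
      hc.eventually_mem (φ.open_target.mem_nhds htgt)
    filter_upwards [hev] with z hz
    have h1 : φ (φ.symm (z, 0)) = (z, 0) := φ.right_inv hz
    rw [hφdef] at h1
    rw [hcoe] at h1
    have h2 : (φ.symm ((z, 0) : (ℂ × ℂ) × ℂ)).1 = z := by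
      have := congrArg Prod.fst h1; simpa [PhiImp] using this
    have h3 : Fimp α (φ.symm ((z, 0) : (ℂ × ℂ) × ℂ)) = 0 := by
      have := congrArg Prod.snd h1; simpa [PhiImp] using this
    have h4 : ((z, (φ.symm ((z, 0) : (ℂ × ℂ) × ℂ)).2) : (ℂ × ℂ) × ℂ)
        = φ.symm ((z, 0) : (ℂ × ℂ) × ℂ) := Prod.ext_iff.mpr ⟨h2.symm, rfl⟩
    rw [h4]; exact h3

/-- The solution `w(u)` of `α log w − 1/w = u` (i.e. `w^α e^(−1/w) = e^u`)
on a left half-plane has the form `w(u) = (1/u)(a + g(1/u, (log u)/u))` with `a ≠ 0` and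
`g` holomorphic near `(0,0)`, `g(0,0) = 0`. -/
theorem stmt_13 (α : ℝ) :
    ∃ (L : ℝ) (a : ℂ) (g : ℂ × ℂ → ℂ), a ≠ 0 ∧ AnalyticAt ℂ g 0 ∧ g 0 = 0 ∧
      ∀ u : ℂ, u.re < -L →
        (α : ℂ) * Complex.log (1 / u * (a + g (1 / u, branchLog u / u)))
          - 1 / (1 / u * (a + g (1 / u, branchLog u / u))) = u := by
  obtain ⟨h, hha, h0, hev⟩ := exists_implicit α
  have hre : ∀ᶠ z in 𝓝 (0 : ℂ × ℂ), 1/2 < (h z).re := by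
    have hc : ContinuousAt (fun z => (h z).re) 0 :=
      Complex.continuous_re.continuousAt.comp hha.continuousAt
    have : (h 0).re ∈ {x : ℝ | 1/2 < x} := by rw [h0]; norm_num
    have := hc.eventually_mem ((isOpen_lt continuous_const continuous_id).mem_nhds this)
    exact this
  obtain ⟨ε, εpos, hball⟩ := Metric.eventually_nhds_iff.mp (hev.and hre)
  refine ⟨max 1 (max (1/ε) (max (64/ε^2) (8*Real.pi/ε))), -1, fun z => 1 - h z,
    by norm_num, analyticAt_const.sub hha, by simp [h0], ?_⟩
  intro u hu
  set L : ℝ := max 1 (max (1/ε) (max (64/ε^2) (8*Real.pi/ε))) with hLdef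
  have hL1 : (1:ℝ) ≤ L := le_max_left _ _
  have hLε : 1/ε ≤ L := le_trans (le_max_left _ _) (le_max_right _ _)
  have hL64 : 64/ε^2 ≤ L := le_trans (le_trans (le_max_left _ _) (le_max_right _ _)) (le_max_right _ _)
  have hLπ : 8*Real.pi/ε ≤ L := le_trans (le_trans (le_max_right _ _) (le_max_right _ _)) (le_max_right _ _)
  have hLpos : (0:ℝ) < L := lt_of_lt_of_le one_pos hL1
  have hure : u.re < -L := hu
  have habs : L < ‖u‖ := by
    have h1 : -u.re ≤ ‖u‖ := le_trans (neg_le_abs _) (Complex.abs_re_le_norm u)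
    linarith
  have htpos : (0:ℝ) < ‖u‖ := lt_trans hLpos habs
  have hu0 : u ≠ 0 := by
    intro hz; rw [hz] at htpos; simp at htpos
  have hnu0 : (-u) ≠ 0 := neg_ne_zero.mpr hu0
  have hreneg : 0 < (-u).re := by simp [Complex.neg_re]; linarith
  -- distance estimate
  set t : ℝ := ‖u‖ with htdef
  have ht1 : (1:ℝ) < t := lt_of_le_of_lt hL1 habs
  have hz1 : ‖1/u‖ < ε := by
    rw [norm_div, norm_one]
    rw [div_lt_iff₀ htpos]
    have h1ε : 1/ε < ‖u‖ := lt_of_le_of_lt hLε habs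
    rw [div_lt_iff₀ εpos] at h1ε
    linarith
  have hsqrtL : 8/ε ≤ Real.sqrt L := by
    have : (8/ε)^2 = 64/ε^2 := by ring
    have h8 : (0:ℝ) ≤ 8/ε := by positivity
    calc 8/ε = Real.sqrt ((8/ε)^2) := (Real.sqrt_sq h8).symm
    _ ≤ Real.sqrt L := Real.sqrt_le_sqrt (by rw [this]; exact hL64)
  have hsqrt_t : Real.sqrt L ≤ Real.sqrt t := Real.sqrt_le_sqrt (le_of_lt habs)
  have hlogt : Real.log t ≤ 2 * Real.sqrt t := by
    have hs : 0 < Real.sqrt t := Real.sqrt_pos.mpr (by linarith)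
    have h1 : Real.log (Real.sqrt t) ≤ Real.sqrt t - 1 := Real.log_le_sub_one_of_pos hs
    have h2 : Real.log (Real.sqrt t) = Real.log t / 2 := Real.log_sqrt (by linarith)
    linarith
  have hbl : ‖branchLog u‖ ≤ Real.log t + 2 * Real.pi := by
    have h1 : ‖Complex.log (-u)‖ ≤ Real.log t + Real.pi := by
      refine le_trans (Complex.norm_le_abs_re_add_abs_im _) ?_
      rw [Complex.log_re, Complex.log_im]
      rw [show ‖-u‖ = t from norm_neg u]
      have h2 : |Real.log t| = Real.log t := abs_of_nonneg (Real.log_nonneg (le_of_lt ht1))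
      have h3 : |(-u).arg| ≤ Real.pi := Complex.abs_arg_le_pi _
      linarith [Real.pi_pos]
    refine le_trans (norm_add_le _ _) ?_
    have : ‖(Real.pi : ℂ) * Complex.I‖ = Real.pi := by
      simp [Complex.norm_real, _root_.abs_of_nonneg Real.pi_pos.le]
    rw [this]; unfold branchLog at *; linarith
  have hz2 : ‖branchLog u / u‖ < ε := by
    rw [norm_div]
    rw [div_lt_iff₀ htpos]
    have key : Real.log t + 2*Real.pi < ε * t := by
      have hεt : ε * Real.sqrt t ≥ 8 := by
        have : ε * (8/ε) = 8 := by field_simp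
        calc (8:ℝ) = ε * (8/ε) := this.symm
        _ ≤ ε * Real.sqrt t := by
            apply mul_le_mul_of_nonneg_left (le_trans hsqrtL hsqrt_t) εpos.le
      have hsq : Real.sqrt t * Real.sqrt t = t := Real.mul_self_sqrt (by linarith)
      have h2s : 2 * Real.sqrt t ≤ ε * t / 2 := by
        have hs : 0 < Real.sqrt t := Real.sqrt_pos.mpr (by linarith)
        rw [ge_iff_le, ← sub_nonneg] at hεt
        nlinarith
      have hπ : 2 * Real.pi < ε * t / 2 := by
        have h1 : 8 * Real.pi / ε < t := lt_of_le_of_lt hLπ habs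
        rw [div_lt_iff₀ εpos] at h1
        nlinarith [Real.pi_pos]
      linarith
    linarith
  have hdist : dist ((1/u, branchLog u / u) : ℂ × ℂ) 0 < ε := by
    rw [Prod.dist_eq]
    simp only [Prod.fst_zero, Prod.snd_zero, dist_zero_right]
    exact max_lt hz1 hz2
  obtain ⟨hFz, hrez⟩ := hball hdist
  set z : ℂ × ℂ := (1/u, branchLog u / u) with hzdef
  set w₁ : ℂ := h z with hwdef
  have hw0 : w₁ ≠ 0 := by
    intro hz; rw [hz] at hrez; simp at hrez; linarith
  have harg1 : |w₁.arg| < Real.pi/2 :=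
    Complex.abs_arg_lt_pi_div_two_iff.mpr (Or.inl (by linarith))
  have hinvre : 0 < ((-u)⁻¹).re := by
    rw [Complex.inv_re]
    exact div_pos hreneg (Complex.normSq_pos.mpr hnu0)
  have harg2 : |((-u)⁻¹).arg| < Real.pi/2 :=
    Complex.abs_arg_lt_pi_div_two_iff.mpr (Or.inl hinvre)
  have hargneg : |(-u).arg| < Real.pi/2 :=
    Complex.abs_arg_lt_pi_div_two_iff.mpr (Or.inl hreneg)
  have hlogmul : Complex.log (w₁ * (-u)⁻¹) = Complex.log w₁ + Complex.log (-u)⁻¹ := by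
    apply Complex.log_mul hw0 (inv_ne_zero hnu0)
    constructor
    · rcases abs_lt.mp harg1 with ⟨a1, _⟩
      rcases abs_lt.mp harg2 with ⟨a2, _⟩
      linarith
    · rcases abs_lt.mp harg1 with ⟨_, b1⟩
      rcases abs_lt.mp harg2 with ⟨_, b2⟩
      linarith [Real.pi_pos]
  have hloginv : Complex.log (-u)⁻¹ = - Complex.log (-u) := by
    apply Complex.log_inv
    intro hp
    rw [hp] at hargneg
    rw [abs_of_pos Real.pi_pos] at hargneg
    linarith [Real.pi_pos]
  have hexp : 1/u * (-1 + (1 - h z)) = w₁ * (-u)⁻¹ := by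
    rw [← hwdef]
    field_simp
    ring
  show (α : ℂ) * Complex.log (1 / u * (-1 + (1 - h z)))
      - 1 / (1 / u * (-1 + (1 - h z))) = u
  rw [hexp, hlogmul, hloginv]
  have hFz' : (α : ℂ) * (1/u * Complex.log w₁ - branchLog u / u
      + Real.pi * Complex.I * (1/u)) + w₁⁻¹ - 1 = 0 := hFz
  unfold branchLog at hFz'
  have hI : ((-u) : ℂ) ≠ 0 := hnu0
  field_simp at hFz' ⊢
  ring_nf
  ring_nf at hFz'
  linear_combination hFz'
end

section
/- For ε = 0 and a holomorphic function F meromorphic at 0 in one variable, the composition F(w(u)), where w(u) = (1/u)(a + g(1/u, (log u)/u)) with a ≠ 0 and g holomorphic near (0,0) with g(0,0)=0, admits an expansion F(w(u)) = Σ_{k ≥ −k₀} (1/u)^k·q_k(log u) on a left half-plane {Re u < −L}, where each q_k is a polynomial; in particular, for any A > 0, F(w(u)) agrees with a finite element of ℂ[u, 1/u, log u] up to an error O(|u|^(−A)). -/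
set_option maxHeartbeats 3200000 in
open Finset in
lemma multilinear_pair (k : ℕ) (f : ContinuousMultilinearMap ℂ (fun _ : Fin k => ℂ × ℂ) ℂ)
    (x y : ℂ) :
    f (fun _ => (x, y)) = ∑ s : Finset (Fin k),
      (x ^ s.card * y ^ (k - s.card)) *
        f (s.piecewise (fun _ => ((1:ℂ), (0:ℂ))) (fun _ => ((0:ℂ), (1:ℂ)))) := by
  classical
  have h1 : (fun _ : Fin k => ((x, y) : ℂ × ℂ)) =
      (fun _ : Fin k => x • ((1:ℂ), (0:ℂ))) + fun _ : Fin k => y • ((0:ℂ), (1:ℂ)) := by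
    funext i; simp [Prod.ext_iff]
  rw [h1]
  rw [show f ((fun _ : Fin k => x • ((1:ℂ),(0:ℂ))) + fun _ : Fin k => y • ((0:ℂ),(1:ℂ)))
      = f.toMultilinearMap ((fun _ : Fin k => x • ((1:ℂ),(0:ℂ)))
        + fun _ : Fin k => y • ((0:ℂ),(1:ℂ))) from rfl, f.toMultilinearMap.map_add_univ]
  refine Finset.sum_congr rfl fun s _ => ?_
  have h2 : s.piecewise (fun _ : Fin k => x • ((1:ℂ), (0:ℂ))) (fun _ => y • ((0:ℂ), (1:ℂ)))
      = fun i => (if i ∈ s then x else y) •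
          (s.piecewise (fun _ : Fin k => ((1:ℂ), (0:ℂ))) (fun _ => ((0:ℂ), (1:ℂ))) i) := by
    funext i
    by_cases hi : i ∈ s <;> simp [Finset.piecewise, hi]
  show f.toMultilinearMap _ = _
  rw [h2, f.toMultilinearMap.map_smul_univ]
  have h3 : (∏ i : Fin k, if i ∈ s then x else y) = x ^ s.card * y ^ (k - s.card) := by
    have : (∏ i : Fin k, if i ∈ s then x else y)
        = ∏ i : Fin k, s.piecewise (fun _ => x) (fun _ => y) i := by
      refine Finset.prod_congr rfl fun i _ => ?_; by_cases hi : i ∈ s <;> simp [hi]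
    rw [this, Finset.prod_piecewise]
    simp [Finset.card_univ_diff, Finset.univ_inter]
  rw [h3]; simp [smul_eq_mul]

set_option maxHeartbeats 3200000 in
/-- For `F` meromorphic at `0` and
`w(u) = (1/u)(a + g(1/u, (log u)/u))` with `a ≠ 0`, `g` holomorphic near `(0,0)`,
`g(0,0) = 0`, the composition `F(w(u))` agrees, for any `A > 0`, with an element of
`ℂ[u, 1/u, log u]` up to an error `O(|u|^(−A))` on a left half-plane. -/
theorem stmt_19 (F : ℂ → ℂ)
    (hF : ∃ (k₀ : ℕ) (G : ℂ → ℂ), AnalyticAt ℂ G 0 ∧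
      ∀ᶠ z in nhdsWithin (0 : ℂ) {(0 : ℂ)}ᶜ, F z = G z / z ^ k₀)
    (a : ℂ) (ha : a ≠ 0) (g : ℂ × ℂ → ℂ) (hg : AnalyticAt ℂ g 0) (hg0 : g 0 = 0)
    (A : ℝ) (hA : 0 < A) :
    ∃ L : ℝ, 0 < L ∧ ∃ p ∈ Pspace, ∃ M : ℝ,
      ∀ u : ℂ, u.re < -L →
        ‖F (1 / u * (a + g (1 / u, branchLog u / u))) - p u‖
          ≤ M * ‖u‖ ^ (-A) := by
  classical
  obtain ⟨k₀, G, hG, hFG⟩ := hF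
  -- The analytic function H
  set H : ℂ × ℂ → ℂ := fun q => G (q.1 * (a + g q)) / (a + g q) ^ k₀ with hH
  have hga : AnalyticAt ℂ (fun q : ℂ × ℂ => a + g q) 0 := analyticAt_const.add hg
  have hinner : AnalyticAt ℂ (fun q : ℂ × ℂ => q.1 * (a + g q)) 0 :=
    analyticAt_fst.mul hga
  have hHA : AnalyticAt ℂ H 0 := by
    have hG' : AnalyticAt ℂ G ((fun q : ℂ × ℂ => q.1 * (a + g q)) 0) := by
      simpa using hG
    have hcomp : AnalyticAt ℂ (fun q : ℂ × ℂ => G (q.1 * (a + g q))) 0 := by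
      have := AnalyticAt.comp (𝕜 := ℂ) (g := G)
        (f := fun q : ℂ × ℂ => q.1 * (a + g q)) (x := 0) hG' hinner
      exact this
    refine hcomp.div (hga.pow k₀) ?_
    simp [hg0, pow_ne_zero, ha]
  obtain ⟨ps, hps⟩ := hHA
  obtain ⟨r, hball⟩ := hps
  obtain ⟨r', hr'pos, hr'lt⟩ : ∃ r' : NNReal, (0 : ENNReal) < r' ∧ (r' : ENNReal) < r :=
    ENNReal.lt_iff_exists_nnreal_btwn.mp hball.r_pos
  have hr'pos' : (0 : ℝ) < r' := by exact_mod_cast hr'pos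
  obtain ⟨aa, haa, C, hC, happrox⟩ := hball.uniform_geometric_approx' hr'lt
  set N : ℕ := 2 * k₀ + 2 * ⌈A⌉₊ + 2 with hN
  -- The polynomial p
  set p : ℂ → ℂ := fun u => ∑ k ∈ Finset.range N, ∑ s : Finset (Fin k),
      (ps k (s.piecewise (fun _ => ((1:ℂ), (0:ℂ))) (fun _ => ((0:ℂ), (1:ℂ))))) •
        (u ^ ((k₀ : ℤ) - k) * branchLog u ^ (k - s.card)) with hp
  have hpmem : p ∈ Pspace := by
    have hpeq : p = ∑ k ∈ Finset.range N, ∑ s : Finset (Fin k),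
        (ps k (s.piecewise (fun _ => ((1:ℂ), (0:ℂ))) (fun _ => ((0:ℂ), (1:ℂ))))) •
          (fun u : ℂ => u ^ ((k₀ : ℤ) - k) * branchLog u ^ (k - s.card)) := by
      funext u
      simp [hp, Finset.sum_apply]
    rw [hpeq]
    refine Submodule.sum_mem _ fun k _ => Submodule.sum_mem _ fun s _ => ?_
    exact Submodule.smul_mem _ _ (Submodule.subset_span ⟨(k₀ : ℤ) - k, k - s.card, rfl⟩)
  -- pointwise identity for u ≠ 0
  have hpval : ∀ u : ℂ, u ≠ 0 →
      p u = u ^ k₀ * ps.partialSum N (1 / u, branchLog u / u) := by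
    intro u hu
    rw [FormalMultilinearSeries.partialSum, Finset.mul_sum, hp]
    refine Finset.sum_congr rfl fun k _ => ?_
    rw [multilinear_pair k (ps k) (1 / u) (branchLog u / u), Finset.mul_sum]
    refine Finset.sum_congr rfl fun s _ => ?_
    set c := s.card with hc
    have hck : c ≤ k := by
      simpa using Finset.card_le_univ s
    set d := k - c with hd
    have hk : c + d = k := Nat.add_sub_cancel' hck
    set Cc : ℂ := ps k (s.piecewise (fun _ => ((1:ℂ), (0:ℂ))) (fun _ => ((0:ℂ), (1:ℂ))))
    show Cc • (u ^ ((k₀ : ℤ) - k) * branchLog u ^ d)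
        = u ^ k₀ * ((1/u) ^ c * (branchLog u / u) ^ d * Cc)
    rw [← hk]
    have hz : u ^ ((k₀ : ℤ) - (c + d : ℕ)) = u ^ k₀ / u ^ (c + d) := by
      rw [zpow_sub₀ hu, zpow_natCast, zpow_natCast]
    rw [hz, smul_eq_mul]
    field_simp
    have hu' : u ^ d * u⁻¹ ^ d = 1 := by rw [← mul_pow, mul_inv_cancel₀ hu, one_pow]
    have hc' : u ^ c * u⁻¹ ^ c = 1 := by rw [← mul_pow, mul_inv_cancel₀ hu, one_pow]
    linear_combination (-(Cc * branchLog u ^ d)) * hu' - (Cc * branchLog u ^ d * (u ^ d * u⁻¹ ^ d)) * hc'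
  -- continuity bound for g
  have hgc : ContinuousAt g 0 := hg.continuousAt
  rw [Metric.continuousAt_iff] at hgc
  obtain ⟨δ, hδpos, hδ⟩ := hgc (min 1 (‖a‖ / 2))
    (lt_min one_pos (half_pos (norm_pos_iff.mpr ha)))
  -- the region where F = G / z^k₀
  rw [Filter.eventually_iff_exists_mem] at hFG
  obtain ⟨S, hS, hSF⟩ := hFG
  rw [mem_nhdsWithin] at hS
  obtain ⟨U, hUopen, hU0, hUsub⟩ := hS
  obtain ⟨ε₁, hε₁pos, hε₁⟩ := Metric.isOpen_iff.mp hUopen 0 hU0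
  -- choice of L
  set m : ℝ := min δ (r' : ℝ) with hm
  have hmpos : 0 < m := lt_min hδpos hr'pos'
  clear_value m
  set L : ℝ := 1 + (12 / m) ^ 2 + (‖a‖ + 1) / ε₁ with hL
  have hsq : (0:ℝ) ≤ (12 / m) ^ 2 := sq_nonneg _
  have hdivnn : (0:ℝ) ≤ (‖a‖ + 1) / ε₁ :=
    div_nonneg (by positivity) hε₁pos.le
  have hLpos : 0 < L := by rw [hL]; linarith
  clear_value L
  refine ⟨L, hLpos, p, hpmem, C * (12 * aa / (r' : ℝ)) ^ N, ?_⟩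
  intro u hu
  set t : ℝ := ‖u‖ with ht
  clear_value t
  have htL : L < t := by
    calc L < -u.re := by linarith
    _ ≤ |u.re| := neg_le_abs _
    _ ≤ t := le_of_le_of_eq (Complex.abs_re_le_norm u) ht.symm
  have ht1 : 1 ≤ t := by
    have hL1 : 1 ≤ L := by rw [hL]; linarith
    linarith
  have htpos : (0:ℝ) < t := by linarith
  have hu0 : u ≠ 0 := by
    intro h; rw [h] at ht; simp at ht; rw [ht] at htpos; exact lt_irrefl _ htpos
  -- note ht : t = ‖u‖
  set s : ℝ := t ^ ((2:ℝ)⁻¹) with hsdef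
  clear_value s
  have hs1 : 1 ≤ s := by rw [hsdef]; exact Real.one_le_rpow ht1 (by norm_num)
  have hspos : 0 < s := by linarith
  have hss : s * s = t := by
    rw [hsdef, ← Real.rpow_add htpos]
    norm_num
  -- bound on branchLog
  have hlog : ‖branchLog u‖ ≤ Real.log t + 2 * Real.pi := by
    have h1 : ‖branchLog u‖ ≤ ‖Complex.log (-u)‖ + Real.pi := by
      unfold branchLog
      refine (norm_add_le _ _).trans ?_
      simp [abs_of_pos Real.pi_pos]
    have h2 : ‖Complex.log (-u)‖ ≤ Real.log t + Real.pi := by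
      unfold Complex.log

      refine (norm_add_le _ _).trans ?_
      have hab : ‖-u‖ = t := by rw [norm_neg]; exact ht.symm
      gcongr
      · rw [hab, Complex.norm_real, Real.norm_eq_abs, abs_of_nonneg (Real.log_nonneg ht1)]
      · rw [norm_mul]
        simpa using Complex.abs_arg_le_pi (-u)
    linarith
  have hlogt : Real.log t ≤ 2 * s - 2 := by
    have h1 : Real.log s ≤ s - 1 := Real.log_le_sub_one_of_pos hspos
    have h2 : Real.log s = (2:ℝ)⁻¹ * Real.log t := by rw [hsdef]; exact Real.log_rpow htpos _
    linarith
  -- bound on the argument y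
  set y : ℂ × ℂ := (1 / u, branchLog u / u) with hy
  have hny : ‖y‖ ≤ 12 / s := by
    have hnu : ‖(1:ℂ) / u‖ = 1 / t := by
      simp [ht]
    have hn2 : ‖branchLog u / u‖ ≤ (Real.log t + 2 * Real.pi) / t := by
      rw [norm_div, ← ht]
      gcongr
    have hπ : Real.pi ≤ 4 := Real.pi_le_four
    have key : (Real.log t + 2 * Real.pi) / t ≤ 12 / s := by
      rw [div_le_div_iff₀ htpos hspos]
      have hlt : Real.log t + 2 * Real.pi ≤ 8 * s := by linarith
      calc (Real.log t + 2 * Real.pi) * s ≤ (8 * s) * s :=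
            mul_le_mul_of_nonneg_right hlt hspos.le
      _ = 8 * t := by rw [mul_assoc, hss]
      _ ≤ 12 * t := by linarith
    have h1t : (1:ℝ) / t ≤ 12 / s := by
      rw [div_le_div_iff₀ htpos hspos]
      nlinarith [hss, hs1, hspos]
    rw [Prod.norm_def]
    simp only [hy]
    exact max_le (hnu ▸ h1t) (hn2.trans key)
  have hym : ‖y‖ < m := by
    have hsgt : 12 / m < s := by
      have hLt' : 1 + (12 / m) ^ 2 + (‖a‖ + 1) / ε₁ < t := by
        rw [← hL]; exact htL
      have h1 : (12 / m) ^ 2 < t := by linarith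
      have hs2 : s ^ 2 = t := by rw [sq]; exact hss
      have h2 : (12 / m) ^ 2 < s ^ 2 := by rw [hs2]; exact h1
      exact lt_of_pow_lt_pow_left₀ 2 hspos.le h2
    calc ‖y‖ ≤ 12 / s := hny
    _ < m := by
      rw [div_lt_iff₀ hspos]
      have h12m : 0 < 12 / m := by positivity
      calc (12:ℝ) = m * (12 / m) := by field_simp
      _ < m * s := by exact mul_lt_mul_of_pos_left hsgt hmpos
  have hyδ : ‖y‖ < δ := hym.trans_le (by rw [hm]; exact min_le_left _ _)
  have hyr' : ‖y‖ < (r' : ℝ) := hym.trans_le (by rw [hm]; exact min_le_right _ _)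
  -- bound on g y
  have hgy : ‖g y‖ < min 1 (‖a‖ / 2) := by
    have := hδ (show dist y 0 < δ by simpa [dist_zero_right] using hyδ)
    simpa [hg0, dist_zero_right] using this
  have hgy1 : ‖g y‖ < 1 := hgy.trans_le (min_le_left _ _)
  have hgy2 : ‖g y‖ < ‖a‖ / 2 := hgy.trans_le (min_le_right _ _)
  have hag : ‖a‖ / 2 ≤ ‖a + g y‖ := by
    have h1 : ‖a‖ ≤ ‖a + g y‖ + ‖g y‖ := by
      calc ‖a‖ = ‖(a + g y) + (-(g y))‖ := by
            rw [add_neg_cancel_right]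
      _ ≤ ‖a + g y‖ + ‖-(g y)‖ := norm_add_le _ _
      _ = ‖a + g y‖ + ‖g y‖ := by rw [norm_neg]
    linarith
  have hagn : (a + g y) ≠ 0 := by
    intro h
    rw [h] at hag
    rw [norm_zero] at hag
    have := norm_pos_iff.mpr ha
    linarith
  -- w is in the region
  set w : ℂ := 1 / u * (a + g y) with hw
  have hwn : w ≠ 0 := mul_ne_zero (by simp [hu0]) hagn
  have hwabs : ‖w‖ < ε₁ := by
    rw [hw, norm_mul]
    have h1 : ‖1 / u‖ = 1 / t := by simp [ht]
    have h2 : ‖a + g y‖ ≤ ‖a‖ + 1 :=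
      (norm_add_le _ _).trans (by linarith)
    rw [h1]
    have hLε : (‖a‖ + 1) / ε₁ < t := by
      have : (‖a‖ + 1) / ε₁ ≤ L := by rw [hL]; linarith
      linarith
    calc 1 / t * ‖a + g y‖ ≤ 1 / t * (‖a‖ + 1) := by
          apply mul_le_mul_of_nonneg_left h2; positivity
    _ = (‖a‖ + 1) / t := by ring
    _ < ε₁ := by
        rw [div_lt_iff₀ htpos]
        rw [div_lt_iff₀ hε₁pos] at hLε
        linarith
  have hFw : F w = G w / w ^ k₀ := by
    apply hSF
    apply hUsub
    constructor
    · exact hε₁ (by simpa [Metric.mem_ball, dist_zero_right] using hwabs)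
    · simpa using hwn
  -- F w = u^k₀ * H y
  have hFH : F w = u ^ k₀ * H y := by
    rw [hFw]
    have hHy : H y = G (1 / u * (a + g y)) / (a + g y) ^ k₀ := rfl
    rw [hHy, ← hw]
    have hwk : w ^ k₀ = (1/u) ^ k₀ * (a + g y) ^ k₀ := by rw [hw, mul_pow]
    rw [hwk, one_div, inv_pow, div_mul_eq_div_div_swap, div_inv_eq_mul]
    ring
  -- the approximation
  have happ := happrox y (by simpa [Metric.mem_ball, dist_zero_right] using hyr') N
  rw [zero_add] at happ
  -- put together
  have hpu : p u = u ^ k₀ * ps.partialSum N y := hpval u hu0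
  rw [hpu, hFH, ← mul_sub]
  rw [norm_mul, norm_pow]
  rw [← ht]
  calc t ^ k₀ * ‖H y - ps.partialSum N y‖
      ≤ t ^ k₀ * (C * (aa * (‖y‖ / (r' : ℝ))) ^ N) := by
        apply mul_le_mul_of_nonneg_left happ (by positivity)
    _ ≤ t ^ k₀ * (C * (aa * ((12 / s) / (r' : ℝ))) ^ N) := by
        have hmono : (aa * (‖y‖ / (r' : ℝ))) ^ N ≤ (aa * ((12 / s) / (r' : ℝ))) ^ N := by
          apply pow_le_pow_left₀
            (mul_nonneg haa.1.le (div_nonneg (norm_nonneg _) hr'pos'.le))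
          exact mul_le_mul_of_nonneg_left ((div_le_div_iff_of_pos_right hr'pos').mpr hny) haa.1.le
        exact mul_le_mul_of_nonneg_left
          (mul_le_mul_of_nonneg_left hmono hC.le) (pow_nonneg htpos.le k₀)
    _ = C * (12 * aa / (r' : ℝ)) ^ N * (t ^ k₀ * (s⁻¹) ^ N) := by
        have harith : aa * ((12 / s) / (r' : ℝ)) = (12 * aa / (r' : ℝ)) * s⁻¹ := by
          field_simp
        rw [harith, mul_pow]
        ring
    _ ≤ C * (12 * aa / (r' : ℝ)) ^ N * t ^ (-A) := by
        have hcoef : 0 ≤ C * (12 * aa / (r' : ℝ)) ^ N :=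
          mul_nonneg hC.le (pow_nonneg
            (div_nonneg (mul_nonneg (by norm_num) haa.1.le) hr'pos'.le) _)
        apply mul_le_mul_of_nonneg_left _ hcoef
        have e1 : s⁻¹ = t ^ (-(2:ℝ)⁻¹) := by
          rw [Real.rpow_neg htpos.le, hsdef]
        have e2 : (s⁻¹) ^ N = t ^ ((-(2:ℝ)⁻¹) * (N:ℝ)) := by
          rw [e1, ← Real.rpow_natCast (t ^ (-(2:ℝ)⁻¹)) N, ← Real.rpow_mul htpos.le]
        have e3 : t ^ k₀ * t ^ ((-(2:ℝ)⁻¹) * (N:ℝ)) = t ^ ((k₀:ℝ) + (-(2:ℝ)⁻¹) * (N:ℝ)) := by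
          rw [← Real.rpow_natCast t k₀, ← Real.rpow_add htpos]
        have e4 : (k₀:ℝ) + (-(2:ℝ)⁻¹) * (N:ℝ) ≤ -A := by
          have h1 : A ≤ (⌈A⌉₊ : ℝ) := Nat.le_ceil A
          have hNr : (N:ℝ) = 2 * k₀ + 2 * ⌈A⌉₊ + 2 := by rw [hN]; push_cast; ring
          rw [hNr]; linarith
        rw [e2, e3]
        exact Real.rpow_le_rpow_of_exponent_le ht1 e4
end
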